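/- Let R = ℂ⟦x,y⟧ (formal power series in two variables), let I ⊆ R be a proper ideal, and let P_1, …, P_M be monomials such that P_1 = 1, each P_{m+1} equals x·P_m or y·P_m, and P_m ∉ I for all m. Then the images of P_1, …, P_M in R/I are linearly independent over ℂ; in particular dim_ℂ R/I ≥ M. -/

import Mathlib

open MvPowerSeries

/-- In `R = ℂ⟦x,y⟧`, if `P_1 = 1`, each `P_{m+1}` is `x·P_m` or `y·P_m`, and no `P_m`
lies in the proper ideal `I`, then the images of `P_1, …, P_M` in `R/I` are linearly
independent over `ℂ`. -/
theorem stmt7 (M : ℕ) (I : Ideal (MvPowerSeries (Fin 2) ℂ)) (hI : I ≠ ⊤)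
    (P : ℕ → MvPowerSeries (Fin 2) ℂ) (hP1 : P 0 = 1)
    (hstep : ∀ m, m + 1 < M →
      P (m + 1) = MvPowerSeries.X 0 * P m ∨ P (m + 1) = MvPowerSeries.X 1 * P m)
    (hnot : ∀ m, m < M → P m ∉ I) :
    LinearIndependent ℂ (fun m : Fin M => Ideal.Quotient.mk I (P m)) := by
  rw [Fintype.linearIndependent_iff]
  intro g hg
  by_contra hne
  push_neg at hne
  obtain ⟨i0, hi0⟩ := hne
  -- the set of indices with nonzero coefficient
  have hsne : (Finset.univ.filter (fun i : Fin M => g i ≠ 0)).Nonempty :=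
    ⟨i0, by simpa using hi0⟩
  obtain ⟨m0, hm0mem, hmin⟩ := Finset.exists_min_image _ id hsne
  have hgm0 : g m0 ≠ 0 := by simpa using hm0mem
  have hmin' : ∀ i : Fin M, i < m0 → g i = 0 := by
    intro i hi
    by_contra h
    exact absurd (hmin i (by simpa using h)) (by simpa using hi)
  -- the combination lies in I
  have hmem : (∑ i : Fin M, g i • P i) ∈ I := by
    rw [← Ideal.Quotient.eq_zero_iff_mem, ← Ideal.Quotient.mkₐ_eq_mk ℂ, map_sum, ← hg]
    refine Finset.sum_congr rfl fun i _ => ?_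
    rw [map_smul, Ideal.Quotient.mkₐ_eq_mk]
  -- factorization of the later monomials
  have key : ∀ n, (m0 : ℕ) + n < M → ∃ Q : MvPowerSeries (Fin 2) ℂ,
      P ((m0 : ℕ) + n) = P m0 * Q ∧
      (MvPowerSeries.constantCoeff : MvPowerSeries (Fin 2) ℂ →+* ℂ) Q = (if n = 0 then 1 else 0) := by
    intro n
    induction n with
    | zero => intro _; exact ⟨1, by simp⟩
    | succ n ih =>
      intro hlt
      obtain ⟨Q, hQ, hQc⟩ := ih (by omega)
      rcases hstep ((m0 : ℕ) + n) (by omega) with h | h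
      · exact ⟨MvPowerSeries.X 0 * Q,
          by show P ((m0 : ℕ) + n + 1) = _; rw [h, hQ]; ring, by simp [map_mul]⟩
      · exact ⟨MvPowerSeries.X 1 * Q,
          by show P ((m0 : ℕ) + n + 1) = _; rw [h, hQ]; ring, by simp [map_mul]⟩
  have key' : ∀ i : Fin M, ∃ Q : MvPowerSeries (Fin 2) ℂ, m0 ≤ i →
      P i = P m0 * Q ∧
      (MvPowerSeries.constantCoeff : MvPowerSeries (Fin 2) ℂ →+* ℂ) Q = (if i = m0 then 1 else 0) := by
    intro i
    by_cases h : m0 ≤ i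
    · obtain ⟨Q, hQ, hQc⟩ := key ((i : ℕ) - m0) (by omega)
      refine ⟨Q, fun _ => ?_⟩
      have hh : (m0 : ℕ) + ((i : ℕ) - m0) = i := by omega
      rw [hh] at hQ
      refine ⟨hQ, ?_⟩
      rw [hQc]
      have hle : (m0 : ℕ) ≤ (i : ℕ) := h
      by_cases he : i = m0
      · simp [he]
      · have h0 : ¬ ((i : ℕ) - (m0 : ℕ) = 0) := fun h0 => he (Fin.ext (by omega))
        simp [he, h0]
    · exact ⟨0, fun h' => absurd h' h⟩
  choose Q hQ using key'
  set u : MvPowerSeries (Fin 2) ℂ := ∑ i : Fin M, g i • Q i with hu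
  have hfac : (∑ i : Fin M, g i • P i) = P m0 * u := by
    rw [hu, Finset.mul_sum]
    refine Finset.sum_congr rfl fun i _ => ?_
    by_cases h : m0 ≤ i
    · rw [(hQ i h).1, Algebra.smul_def, Algebra.smul_def]; ring
    · rw [hmin' i (by omega)]; simp
  have hcu : (MvPowerSeries.constantCoeff : MvPowerSeries (Fin 2) ℂ →+* ℂ) u = g m0 := by
    rw [hu, map_sum]
    rw [show g m0 = ∑ i : Fin M, (if i = m0 then g m0 else 0) by simp]
    refine Finset.sum_congr rfl fun i _ => ?_
    by_cases he : i = m0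
    · subst he
      rw [Algebra.smul_def, map_mul, (hQ i le_rfl).2]
      simp [MvPowerSeries.algebraMap_apply]
    · by_cases h : m0 ≤ i
      · rw [Algebra.smul_def, map_mul, (hQ i h).2]
        simp [he]
      · have hz : g i = 0 := hmin' i (lt_of_not_ge h)
        simp [hz, he]
  have hunit : IsUnit u := by
    rw [MvPowerSeries.isUnit_iff_constantCoeff, hcu]
    exact hgm0.isUnit
  obtain ⟨v, hv⟩ := hunit
  have : P m0 ∈ I := by
    have h1 : P m0 * u ∈ I := hfac ▸ hmem
    have h2 : P m0 * u * (↑v⁻¹) ∈ I := I.mul_mem_right _ h1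
    rwa [mul_assoc, ← hv, Units.mul_inv, mul_one] at h2
  exact hnot m0 m0.isLt this
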